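/- Let F be the swap unitary on ℂ²⊗ℂ², F(u⊗v) = v⊗u, and let |Φ⁺⟩ = (|00⟩+|11⟩)/√2. Consider the four-qubit pure state obtained from |Φ⁺⟩^{AA'}⊗|Φ⁺⟩^{BB'} by applying F to the pair of subsystems (A, B). Then the reduced density matrix of this state on the subsystems AA' (tracing out BB') equals (1/4)·I₄; equivalently, the resulting state is maximally entangled of Schmidt rank 4 across the bipartition AA'|BB', so its entanglement entropy across that cut equals 2 ebits (this is the entangling power computation showing swap can generate two ebits). -/
import Mathlib


open Matrix Complex
open scoped Matrix

noncomputable section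

/-- Reduced density matrix of a bipartite pure state (tracing out the second factor). -/
def redDM {m n : Type*} [Fintype n] (η : m × n → ℂ) : Matrix m m ℂ :=
  Matrix.of fun i i' => ∑ j, η (i, j) * star (η (i', j))

theorem redDM_isHermitian {m n : Type*} [Fintype n] (η : m × n → ℂ) :
    (redDM η).IsHermitian := by
  ext i j
  simp only [redDM, Matrix.conjTranspose_apply, Matrix.of_apply, star_sum, star_mul',
    star_star]
  exact Finset.sum_congr rfl fun x _ => mul_comm _ _

/-- The entanglement entropy (in base 2) of a bipartite pure state: the von Neumann
entropy of its reduced density matrix, with the convention 0·log₂0 = 0. -/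
def entEntropy {m n : Type*} [Fintype m] [Fintype n] [DecidableEq m] (η : m × n → ℂ) : ℝ :=
  -∑ i, (redDM_isHermitian η).eigenvalues i *
      Real.logb 2 ((redDM_isHermitian η).eigenvalues i)

/-- The swap unitary F on ℂ²⊗ℂ², F(u⊗v) = v⊗u. -/
def swapF : Matrix (Fin 2 × Fin 2) (Fin 2 × Fin 2) ℂ :=
  Matrix.of fun x y => if x.1 = y.2 ∧ x.2 = y.1 then 1 else 0

/-- The ebit |Φ⁺⟩ = (|00⟩+|11⟩)/√2. -/
def ebit : Fin 2 × Fin 2 → ℂ := fun x => if x.1 = x.2 then (Real.sqrt 2 : ℂ)⁻¹ else 0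

/-- The swap F applied to the subsystems (A,B) of the four-qubit system AA'BB',
as an operator on vectors indexed by ((A,A'),(B,B')). -/
def swapAB :
    Matrix ((Fin 2 × Fin 2) × (Fin 2 × Fin 2)) ((Fin 2 × Fin 2) × (Fin 2 × Fin 2)) ℂ :=
  Matrix.of fun x y =>
    swapF (x.1.1, x.2.1) (y.1.1, y.2.1) * (if x.1.2 = y.1.2 then 1 else 0) *
      (if x.2.2 = y.2.2 then 1 else 0)


lemma sqrt2_sq' : ((Real.sqrt 2 : ℂ))⁻¹ * ((Real.sqrt 2 : ℂ))⁻¹ = 1/2 := by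
  rw [← mul_inv, ← Complex.ofReal_mul, Real.mul_self_sqrt (by norm_num)]
  norm_num

lemma eta_eq' : (swapAB.mulVec fun x => ebit x.1 * ebit x.2) =
    fun x => if x.1.1 = x.2.2 ∧ x.2.1 = x.1.2 then 1/2 else 0 := by
  funext x
  obtain ⟨⟨a, a'⟩, b, b'⟩ := x
  simp only [Matrix.mulVec, dotProduct, swapAB, swapF, ebit, Matrix.of_apply,
    Fintype.sum_prod_type, Fin.sum_univ_two]
  fin_cases a <;> fin_cases a' <;> fin_cases b <;> fin_cases b' <;>
    simp <;> rw [sqrt2_sq'] <;> norm_num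

lemma hred' : redDM (swapAB.mulVec fun x => ebit x.1 * ebit x.2) =
    (1 / 4 : ℂ) • (1 : Matrix (Fin 2 × Fin 2) (Fin 2 × Fin 2) ℂ) := by
  rw [eta_eq']
  ext ⟨a, a'⟩ ⟨c, c'⟩
  simp only [redDM, Matrix.of_apply, Fintype.sum_prod_type, Fin.sum_univ_two,
    Matrix.smul_apply, Matrix.one_apply]
  fin_cases a <;> fin_cases a' <;> fin_cases c <;> fin_cases c' <;> norm_num [Prod.ext_iff]

lemma eig_of_smul_one' {n : Type*} [Fintype n] [DecidableEq n] {A : Matrix n n ℂ}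
    (hA : A.IsHermitian) (c : ℝ) (h : A = (c : ℂ) • 1) (i : n) :
    hA.eigenvalues i = c := by
  subst h
  have hv := hA.mulVec_eigenvectorBasis i
  rw [Matrix.smul_mulVec, Matrix.one_mulVec] at hv
  have hne : ⇑(hA.eigenvectorBasis i) ≠ 0 := by
    intro h0
    exact hA.eigenvectorBasis.orthonormal.ne_zero i (by ext x; exact congrFun h0 x)
  obtain ⟨x, hx⟩ := Function.ne_iff.mp hne
  have := congrFun hv x
  simp only [Pi.smul_apply, smul_eq_mul, Complex.real_smul] at this
  have hce : (c : ℂ) = (hA.eigenvalues i : ℂ) := mul_right_cancel₀ hx this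
  exact_mod_cast hce.symm

/-- The entangling-power computation for swap: applying F to subsystems (A,B) of
|Φ⁺⟩^{AA'}⊗|Φ⁺⟩^{BB'} yields a state whose reduced density matrix on AA' is (1/4)·I₄,
i.e. a maximally entangled state of Schmidt rank 4 across AA'|BB', of entanglement
entropy 2 ebits. -/
theorem swap_generates_two_ebits :
    redDM (swapAB.mulVec fun x => ebit x.1 * ebit x.2) =
        (1 / 4 : ℂ) • (1 : Matrix (Fin 2 × Fin 2) (Fin 2 × Fin 2) ℂ) ∧
      entEntropy (swapAB.mulVec fun x => ebit x.1 * ebit x.2) = 2 := by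
  refine ⟨hred', ?_⟩
  have heig : ∀ i, (redDM_isHermitian (swapAB.mulVec fun x => ebit x.1 * ebit x.2)).eigenvalues i
      = (1/4 : ℝ) := fun i => eig_of_smul_one' _ (1/4) (by push_cast; exact hred') i
  have h4 : (2:ℝ) ^ (-2:ℝ) = 1/4 := by
    rw [show (-2:ℝ) = ((-2:ℤ):ℝ) by norm_num, Real.rpow_intCast]
    norm_num
  have hlog : Real.logb 2 (1/4 : ℝ) = -2 := by
    rw [← h4]
    exact Real.logb_rpow (by norm_num) (by norm_num)
  simp only [entEntropy, heig, hlog, Fintype.sum_prod_type, Fin.sum_univ_two]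
  norm_num

end
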